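/- Assume 0 < p_s, p_s^e < 1 and 0 < p_α ≤ 1. Then ρ is a stationary probability distribution of the age-pair chain: (i) ρ(i,j) ≥ 0 for all (i,j) ∈ ℕ×ℕ; (ii) ∑_{(i,j)∈ℕ×ℕ} ρ(i,j) = 1 (the sum converges); and (iii) ρ satisfies the balance equations ρ(0,0) = λ11, ρ(0, j+1) = λ10 · ∑_{i∈ℕ} ρ(i,j) for every j ∈ ℕ, ρ(i+1, 0) = λ01 · ∑_{j∈ℕ} ρ(i,j) for every i ∈ ℕ, and ρ(i+1, j+1) = λ00 · ρ(i,j) for all i, j ∈ ℕ. -/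

import Mathlib

noncomputable section

/-- λ11 = p_α p_s p_s^e -/
def l11 (ps pse pa : ℝ) : ℝ := pa * ps * pse
/-- λ10 = p_α p_s (1 − p_s^e) -/
def l10 (ps pse pa : ℝ) : ℝ := pa * ps * (1 - pse)
/-- λ01 = p_α (1 − p_s) p_s^e -/
def l01 (ps pse pa : ℝ) : ℝ := pa * (1 - ps) * pse
/-- λ00 = p_α (1 − p_s)(1 − p_s^e) + (1 − p_α) -/
def l00 (ps pse pa : ℝ) : ℝ := pa * (1 - ps) * (1 - pse) + (1 - pa)
/-- P_A = λ11 + λ10 -/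
def PA (ps pse pa : ℝ) : ℝ := l11 ps pse pa + l10 ps pse pa
/-- P_B = λ11 + λ01 -/
def PB (ps pse pa : ℝ) : ℝ := l11 ps pse pa + l01 ps pse pa

/-- Stationary distribution ρ of the joint age process on ℕ×ℕ. -/
def rho (ps pse pa : ℝ) : ℕ × ℕ → ℝ := fun ij =>
  if ij.1 = ij.2 then l11 ps pse pa * l00 ps pse pa ^ ij.1
  else if ij.1 < ij.2 then
    l10 ps pse pa * PB ps pse pa * (1 - PB ps pse pa) ^ (ij.2 - ij.1 - 1) *
      l00 ps pse pa ^ ij.1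
  else
    l01 ps pse pa * PA ps pse pa * (1 - PA ps pse pa) ^ (ij.1 - ij.2 - 1) *
      l00 ps pse pa ^ ij.2

lemma rho_swap (ps pse pa : ℝ) (i j : ℕ) :
    rho ps pse pa (i, j) = rho pse ps pa (j, i) := by
  rcases lt_trichotomy i j with h | h | h
  · simp only [rho, h.ne, if_false, h, if_true, h.ne', (not_lt.2 h.le)]
    simp only [l10, l01, PB, PA, l11, l00]
    ring
  · simp only [rho, h, if_true]
    simp only [l11, l00]
    ring
  · simp only [rho, h.ne', if_false, h.ne, (not_lt.2 h.le), if_false, h, if_true]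
    simp only [l10, l01, PB, PA, l11, l00]
    ring

lemma PB_swap (ps pse pa : ℝ) : PB pse ps pa = PA ps pse pa := by
  simp only [PA, PB, l11, l01, l10]; ring

/-- The sum of a row: for fixed `j`, `∑ᵢ ρ(i,j) = P_B (1 - P_B)^j`. -/
lemma row_hasSum (ps pse pa : ℝ)
    (hs0 : 0 < ps) (hs1 : ps < 1) (he0 : 0 < pse) (he1 : pse < 1)
    (ha0 : 0 < pa) (ha1 : pa ≤ 1) (j : ℕ) :
    HasSum (fun i => rho ps pse pa (i, j))
      (PB ps pse pa * (1 - PB ps pse pa) ^ j) := by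
  have hPA : PA ps pse pa = pa * ps := by simp only [PA, l11, l10]; ring
  have hPA0 : 0 < PA ps pse pa := by rw [hPA]; positivity
  have hPA1 : PA ps pse pa < 1 := by rw [hPA]; nlinarith
  -- tail sum
  have htail : HasSum (fun n : ℕ => rho ps pse pa (n + (j + 1), j))
      (l01 ps pse pa * l00 ps pse pa ^ j) := by
    have hg : HasSum (fun n : ℕ => (1 - PA ps pse pa) ^ n)
        (1 - (1 - PA ps pse pa))⁻¹ :=
      hasSum_geometric_of_lt_one (by linarith) (by linarith)
    have h4 := hg.mul_left (l01 ps pse pa * PA ps pse pa * l00 ps pse pa ^ j)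
    have hv : l01 ps pse pa * PA ps pse pa * l00 ps pse pa ^ j *
        (1 - (1 - PA ps pse pa))⁻¹ = l01 ps pse pa * l00 ps pse pa ^ j := by
      rw [show (1 - (1 - PA ps pse pa)) = PA ps pse pa by ring]
      field_simp
    rw [hv] at h4
    convert h4 using 1
    rfl
    funext n
    have h1 : ¬ (n + (j + 1) = j) := by omega
    have h2 : ¬ (n + (j + 1) < j) := by omega
    have h3 : n + (j + 1) - j - 1 = n := by omega
    simp only [rho, h1, if_false, h2, if_false, h3]
    ring
  have htail' := (hasSum_nat_add_iff
    (f := fun i => rho ps pse pa (i, j)) (j + 1)).1 htail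
  convert htail' using 1
  rfl
  -- value equality
  rw [Finset.sum_range_succ]
  have hrr : rho ps pse pa (j, j) = l11 ps pse pa * l00 ps pse pa ^ j := by
    simp [rho]
  have hsum : ∑ i ∈ Finset.range j, rho ps pse pa (i, j)
      = l10 ps pse pa * PB ps pse pa *
        ∑ i ∈ Finset.range j, l00 ps pse pa ^ i * (1 - PB ps pse pa) ^ (j - 1 - i) := by
    rw [Finset.mul_sum]
    refine Finset.sum_congr rfl fun i hi => ?_
    have hij : i < j := Finset.mem_range.mp hi
    have h1 : ¬ (i = j) := hij.ne
    have h2 : j - i - 1 = j - 1 - i := by omega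
    simp only [rho, h1, if_false, hij, if_true, h2]
    ring
  have hgeom : l10 ps pse pa *
      (∑ i ∈ Finset.range j, l00 ps pse pa ^ i * (1 - PB ps pse pa) ^ (j - 1 - i))
      = (1 - PB ps pse pa) ^ j - l00 ps pse pa ^ j := by
    have geo := geom_sum₂_mul (l00 ps pse pa) (1 - PB ps pse pa) j
    have hba : l00 ps pse pa - (1 - PB ps pse pa) = -(l10 ps pse pa) := by
      simp only [l00, PB, l11, l01, l10]; ring
    rw [hba] at geo
    linear_combination -geo
  have hPB : l11 ps pse pa + l01 ps pse pa = PB ps pse pa := rfl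
  rw [hrr, hsum]
  linear_combination -(PB ps pse pa) * hgeom - l00 ps pse pa ^ j * hPB

theorem stmt11 (ps pse pa : ℝ)
    (hs0 : 0 < ps) (hs1 : ps < 1) (he0 : 0 < pse) (he1 : pse < 1)
    (ha0 : 0 < pa) (ha1 : pa ≤ 1) :
    (∀ ij : ℕ × ℕ, 0 ≤ rho ps pse pa ij) ∧
    HasSum (rho ps pse pa) 1 ∧
    (rho ps pse pa (0, 0) = l11 ps pse pa ∧
     (∀ j : ℕ, Summable (fun i => rho ps pse pa (i, j)) ∧
        rho ps pse pa (0, j + 1) = l10 ps pse pa * ∑' i, rho ps pse pa (i, j)) ∧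
     (∀ i : ℕ, Summable (fun j => rho ps pse pa (i, j)) ∧
        rho ps pse pa (i + 1, 0) = l01 ps pse pa * ∑' j, rho ps pse pa (i, j)) ∧
     (∀ i j : ℕ, rho ps pse pa (i + 1, j + 1) = l00 ps pse pa * rho ps pse pa (i, j))) := by
  have hPA : PA ps pse pa = pa * ps := by simp only [PA, l11, l10]; ring
  have hPB : PB ps pse pa = pa * pse := by simp only [PB, l11, l01]; ring
  have hPA0 : 0 < PA ps pse pa := by rw [hPA]; positivity
  have hPA1 : PA ps pse pa < 1 := by rw [hPA]; nlinarith
  have hPB0 : 0 < PB ps pse pa := by rw [hPB]; positivity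
  have hPB1 : PB ps pse pa < 1 := by rw [hPB]; nlinarith
  have h11 : 0 ≤ l11 ps pse pa := by simp only [l11]; positivity
  have h10 : 0 ≤ l10 ps pse pa := by
    simp only [l10]
    have : 0 ≤ 1 - pse := by linarith
    positivity
  have h01 : 0 ≤ l01 ps pse pa := by
    simp only [l01]
    have : 0 ≤ 1 - ps := by linarith
    positivity
  have h00 : 0 ≤ l00 ps pse pa := by
    simp only [l00]
    nlinarith
  -- nonnegativity
  have hnn : ∀ ij : ℕ × ℕ, 0 ≤ rho ps pse pa ij := by
    intro ij
    unfold rho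
    split_ifs
    · exact mul_nonneg h11 (pow_nonneg h00 _)
    · exact mul_nonneg (mul_nonneg (mul_nonneg h10 hPB0.le)
        (pow_nonneg (by linarith) _)) (pow_nonneg h00 _)
    · exact mul_nonneg (mul_nonneg (mul_nonneg h01 hPA0.le)
        (pow_nonneg (by linarith) _)) (pow_nonneg h00 _)
  -- row sums (fixed second coordinate)
  have hrow : ∀ j : ℕ, HasSum (fun i => rho ps pse pa (i, j))
      (PB ps pse pa * (1 - PB ps pse pa) ^ j) :=
    row_hasSum ps pse pa hs0 hs1 he0 he1 ha0 ha1
  -- column sums (fixed first coordinate)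
  have hcol : ∀ i : ℕ, HasSum (fun j => rho ps pse pa (i, j))
      (PA ps pse pa * (1 - PA ps pse pa) ^ i) := by
    intro i
    have := row_hasSum pse ps pa he0 he1 hs0 hs1 ha0 ha1 i
    rw [PB_swap] at this
    convert this using 2 with j
    exact rho_swap ps pse pa i j
  -- sum of column sums
  have hgA : HasSum (fun i : ℕ => PA ps pse pa * (1 - PA ps pse pa) ^ i) 1 := by
    have hg : HasSum (fun i : ℕ => (1 - PA ps pse pa) ^ i)
        (1 - (1 - PA ps pse pa))⁻¹ :=
      hasSum_geometric_of_lt_one (by linarith) (by linarith)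
    have := hg.mul_left (PA ps pse pa)
    convert this using 1
    rfl
    rw [show (1 - (1 - PA ps pse pa)) = PA ps pse pa by ring]
    field_simp
  -- total summability
  have hsummable : Summable (rho ps pse pa) := by
    rw [summable_prod_of_nonneg hnn]
    refine ⟨fun i => (hcol i).summable, ?_⟩
    have : (fun i : ℕ => ∑' j, rho ps pse pa (i, j))
        = fun i => PA ps pse pa * (1 - PA ps pse pa) ^ i := by
      funext i; exact (hcol i).tsum_eq
    rw [this]
    exact hgA.summable
  have htotal : HasSum (rho ps pse pa) 1 := by
    have h1 : HasSum (fun i : ℕ => PA ps pse pa * (1 - PA ps pse pa) ^ i)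
        (∑' p, rho ps pse pa p) := hsummable.hasSum.prod_fiberwise hcol
    have := h1.unique hgA
    rw [← this]
    exact hsummable.hasSum
  refine ⟨hnn, htotal, by simp [rho], ?_, ?_, ?_⟩
  · intro j
    refine ⟨(hrow j).summable, ?_⟩
    rw [(hrow j).tsum_eq]
    simp only [rho]
    norm_num
    ring
  · intro i
    refine ⟨(hcol i).summable, ?_⟩
    rw [(hcol i).tsum_eq]
    simp only [rho]
    norm_num
    ring
  · intro i j
    rcases lt_trichotomy i j with h | h | h
    · have h1 : ¬ (i + 1 = j + 1) := by omega
      have h2 : i + 1 < j + 1 := by omega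
      have h3 : j + 1 - (i + 1) - 1 = j - i - 1 := by omega
      simp only [rho, h1, if_false, h2, if_true, h.ne, h, h3]
      ring
    · subst h
      have e1 : rho ps pse pa (i + 1, i + 1) =
          l11 ps pse pa * l00 ps pse pa ^ (i + 1) := by simp [rho]
      have e2 : rho ps pse pa (i, i) = l11 ps pse pa * l00 ps pse pa ^ i := by
        simp [rho]
      rw [e1, e2]
      ring
    · have h1 : ¬ (i + 1 = j + 1) := by omega
      have h2 : ¬ (i + 1 < j + 1) := by omega
      have h3 : i + 1 - (j + 1) - 1 = i - j - 1 := by omega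
      simp only [rho, h1, if_false, h2, if_false, h.ne', (not_lt.2 h.le), h3]
      ring
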